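/- arXiv:1611.09882 — 2 statements merged into one kernel-verified Lean document; each statement's English description precedes it below -/
import Mathlib

section
/- Let ω ∈ ℝ with |ω| > m > 0, let κ(ω) = √(ω² - m²) > 0, and let ε > 0 with ε sufficiently small relative to |ω| - m (e.g. 0 < ε ≤ (|ω|-m)/n for a suitable fixed n ∈ ℕ). Then Im √((ω+iε)² - m²) ≤ 2εω/κ(ω) when ω > m, where the square root is the branch with positive imaginary part on the upper half-plane. -/
open Real

noncomputable section

/-- For `ω > m > 0` and `ε > 0` small relative to `ω - m`,
`Im √((ω+iε)² - m²) ≤ 2εω/√(ω²-m²)` (principal branch, which has positive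
imaginary part on the upper half-plane). -/
theorem stmt7 (m ω : ℝ) (hm : 0 < m) (hω : m < ω) :
    ∃ n : ℕ, 0 < n ∧ ∀ ε : ℝ, 0 < ε → ε ≤ (ω - m) / n →
      (((((ω : ℂ) + (ε : ℂ) * Complex.I) ^ 2 - (m : ℂ) ^ 2) ^ (1 / 2 : ℂ)).im
        ≤ 2 * ε * ω / Real.sqrt (ω ^ 2 - m ^ 2)) := by
  refine ⟨2, by norm_num, ?_⟩
  intro ε hε hε2
  set z : ℂ := ((ω : ℂ) + (ε : ℂ) * Complex.I) ^ 2 - (m : ℂ) ^ 2 with hz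
  clear_value z
  have hre : z.re = ω ^ 2 - ε ^ 2 - m ^ 2 := by
    simp [hz, pow_two, Complex.mul_re, Complex.mul_im]
  have him : z.im = 2 * ε * ω := by
    simp [hz, pow_two, Complex.mul_re, Complex.mul_im]; ring
  have hεsmall : ε ≤ (ω - m) / 2 := by exact_mod_cast hε2
  have hωm : 0 < ω - m := by linarith
  have hA : 0 < ω ^ 2 - ε ^ 2 - m ^ 2 := by nlinarith
  set A : ℝ := ω ^ 2 - ε ^ 2 - m ^ 2 with hAdef
  set B : ℝ := 2 * ε * ω with hBdef
  clear_value A B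
  have hB : 0 < B := by rw [hBdef]; nlinarith
  have habs : ‖z‖ ≤ A + B ^ 2 / (2 * A) := by
    rw [Complex.norm_def, Complex.normSq_apply, hre, him]
    have h1 : A * A + B * B ≤ (A + B ^ 2 / (2 * A)) ^ 2 := by
      have : A * (B ^ 2 / (2 * A)) = B ^ 2 / 2 := by
        field_simp
      nlinarith [sq_nonneg (B ^ 2 / (2 * A))]
    calc Real.sqrt (A * A + B * B) ≤ Real.sqrt ((A + B ^ 2 / (2 * A)) ^ 2) :=
        Real.sqrt_le_sqrt h1
      _ = A + B ^ 2 / (2 * A) := Real.sqrt_sq (by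
        have := div_nonneg (sq_nonneg B) (by linarith : (0:ℝ) ≤ 2 * A); linarith)
  have him' : 0 ≤ z.im := by rw [him]; positivity
  have key : (z ^ (1 / 2 : ℂ)).im = Real.sqrt ((‖z‖ - z.re) / 2) := by
    rw [show (1 / 2 : ℂ) = (2⁻¹ : ℂ) by norm_num]
    exact Complex.cpow_inv_two_im_eq_sqrt him'
  rw [key]
  have hκ : 0 < Real.sqrt (ω ^ 2 - m ^ 2) := Real.sqrt_pos.2 (by nlinarith)
  have hκsq : Real.sqrt (ω ^ 2 - m ^ 2) ^ 2 = ω ^ 2 - m ^ 2 :=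
    Real.sq_sqrt (by nlinarith)
  have htarget : (‖z‖ - z.re) / 2 ≤ (2 * ε * ω / Real.sqrt (ω ^ 2 - m ^ 2)) ^ 2 := by
    rw [hre]
    have h1 : (‖z‖ - A) / 2 ≤ B ^ 2 / (4 * A) := by
      have := habs
      have h2A : (0:ℝ) < 2 * A := by positivity
      rw [div_le_div_iff₀ two_pos (by positivity)]
      have hmul : B ^ 2 / (2 * A) * (2 * A) = B ^ 2 := by field_simp
      have h3 := mul_le_mul_of_nonneg_right
        (by linarith : ‖z‖ - A ≤ B ^ 2 / (2 * A)) (by linarith : (0:ℝ) ≤ 2 * A)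
      rw [hmul] at h3
      calc (‖z‖ - A) * (4 * A) = 2 * ((‖z‖ - A) * (2 * A)) := by ring
        _ ≤ 2 * B ^ 2 := by linarith
        _ = B ^ 2 * 2 := by ring
    have h2 : B ^ 2 / (4 * A) ≤ (2 * ε * ω / Real.sqrt (ω ^ 2 - m ^ 2)) ^ 2 := by
      rw [div_pow, hκsq]
      rw [div_le_div_iff₀ (by positivity) (by nlinarith)]
      have h4 : 4 * ε ^ 2 ≤ 3 * (ω ^ 2 - m ^ 2) := by nlinarith
      have hB2 : B ^ 2 = 4 * ε ^ 2 * ω ^ 2 := by rw [hBdef]; ring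
      nlinarith [sq_nonneg ε, sq_nonneg ω]
    linarith
  have hfinal := Real.sqrt_le_sqrt htarget
  rw [Real.sqrt_sq (div_nonneg (by nlinarith) hκ.le)] at hfinal
  rw [hBdef]
  exact hfinal
end
end

section
/- Let ζ̃ be a tempered distribution on ℝ that is locally L² on ℝ \ [-m,m], and let ζ(t+s_j) → η(t) uniformly on compacts for some sequence s_j → ∞, with ζ, η bounded continuous functions (so η̃ is the distributional limit of e^{-iωs_j}ζ̃(ω) on test functions supported away from [-m,m]). Then supp η̃ ⊆ [-m,m]. -/
open MeasureTheory Real Filter Topology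

noncomputable section

/-- The Fourier transform (convention `φ̂(ω) = ∫ e^{iωt} φ(t) dt`) of a Schwartz function. -/
def myFT (φ : SchwartzMap ℝ ℂ) (ω : ℝ) : ℂ :=
  ∫ t : ℝ, Complex.exp (Complex.I * ω * t) * φ t

/-- The support of the distributional Fourier transform of a (bounded) function. -/
def fourierSupp (f : ℝ → ℂ) : Set ℝ :=
  {ω : ℝ | ∀ ε > (0 : ℝ), ∃ φ : SchwartzMap ℝ ℂ,
    tsupport (fun x => φ x) ⊆ Metric.ball ω ε ∧ (∫ t : ℝ, f t * myFT φ t) ≠ 0}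

lemma hasTemperateGrowth_cexp (a : ℝ) :
    Function.HasTemperateGrowth (fun x : ℝ => Complex.exp (Complex.I * a * x)) := by
  have key : ∀ n : ℕ, iteratedDeriv n (fun x : ℝ => Complex.exp (Complex.I * a * x))
      = fun x : ℝ => (Complex.I * a) ^ n * Complex.exp (Complex.I * a * x) := by
    intro n
    induction n with
    | zero => simp
    | succ n ih =>
      rw [iteratedDeriv_succ, ih]
      funext x
      have hf : HasDerivAt (fun x : ℝ => (Complex.I * a * x : ℂ)) (Complex.I * a) x := by
        simpa using (Complex.ofRealCLM.hasDerivAt (x := x)).const_mul (Complex.I * a)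
      have h1 := hf.cexp
      rw [deriv_const_mul _ h1.differentiableAt, h1.deriv]
      ring
  constructor
  · exact ContDiff.cexp ((contDiff_const.mul Complex.ofRealCLM.contDiff))
  · intro n
    refine ⟨0, ‖(Complex.I * (a:ℂ))‖ ^ n, fun x => ?_⟩
    rw [norm_iteratedFDeriv_eq_norm_iteratedDeriv, key]
    simp [Complex.norm_exp, norm_mul, norm_pow]

-- Fourier identity for myFT
lemma myFT_eq (φ : SchwartzMap ℝ ℂ) (ω : ℝ) :
    myFT φ ω = FourierTransform.fourier (fun t : ℝ => φ t) (-(ω / (2 * π))) := by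
  rw [Real.fourier_real_eq_integral_exp_smul, myFT]
  congr 1
  funext v
  rw [smul_eq_mul]
  congr 1
  have hπ : (π : ℂ) ≠ 0 := Complex.ofReal_ne_zero.2 pi_ne_zero
  push_cast
  congr 1
  field_simp


/-- If `ζ̃` is locally `L²` outside `[-m,m]` and `ζ(·+s_j) → η` uniformly on compacts
with `s_j → ∞`, then `supp η̃ ⊆ [-m,m]`. -/
theorem stmt18 (m : ℝ) (hm : 0 < m) (ζ η : ℝ → ℂ)
    (hζc : Continuous ζ) (hζb : ∃ M : ℝ, ∀ t, ‖ζ t‖ ≤ M)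
    (hηc : Continuous η) (hηb : ∃ M : ℝ, ∀ t, ‖η t‖ ≤ M)
    (hloc : ∀ K : Set ℝ, IsCompact K → K ∩ Set.Icc (-m) m = ∅ →
      ∃ h : ℝ → ℂ, MemLp h 2 (volume.restrict K) ∧
        ∀ φ : SchwartzMap ℝ ℂ, tsupport (fun x => φ x) ⊆ K →
          (∫ t : ℝ, ζ t * myFT φ t) = ∫ ω in K, h ω * φ ω)
    (s : ℕ → ℝ) (hs : Tendsto s atTop atTop)
    (hconv : ∀ T > (0 : ℝ),
      TendstoUniformlyOn (fun j t => ζ (t + s j)) η atTop (Set.Icc (-T) T)) :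
    fourierSupp η ⊆ Set.Icc (-m) m := by
  intro ω₀ hω₀
  by_contra hmem
  obtain ⟨M, hM⟩ := hζb
  obtain ⟨δ, hδ0, hδ⟩ := Metric.isOpen_iff.1 (isClosed_Icc.isOpen_compl) ω₀ hmem
  set K := Metric.closedBall ω₀ (δ / 2) with hK
  have hKdisj : K ∩ Set.Icc (-m) m = ∅ := by
    rw [Set.eq_empty_iff_forall_notMem]
    intro x hx
    exact hδ (Metric.closedBall_subset_ball (half_lt_self hδ0) hx.1) hx.2
  have hKc : IsCompact K := isCompact_closedBall _ _
  obtain ⟨h, hh2, hrep⟩ := hloc K hKc hKdisj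
  obtain ⟨φ, hφsupp, hφne⟩ := hω₀ (δ / 2) (by linarith)
  have hφK : tsupport (fun x => φ x) ⊆ K :=
    hφsupp.trans Metric.ball_subset_closedBall
  -- integrability and continuity of myFT φ
  set Φ : SchwartzMap ℝ ℂ := SchwartzMap.fourierTransformCLM ℝ φ with hΦ
  have hFT : ∀ ω : ℝ, myFT φ ω = Φ (-(2 * π)⁻¹ * ω) := by
    intro ω
    rw [myFT_eq, hΦ, SchwartzMap.fourierTransformCLM_apply, SchwartzMap.fourier_coe]
    congr 1
    ring
  have hFTi : Integrable (myFT φ) := by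
    have := Φ.integrable.comp_mul_left' (R := -(2 * π)⁻¹)
      (by simp [pi_ne_zero])
    exact this.congr (Filter.Eventually.of_forall fun ω => (hFT ω).symm)
  have hFTc : Continuous (myFT φ) := by
    have : Continuous fun ω : ℝ => Φ (-(2 * π)⁻¹ * ω) :=
      Φ.continuous.comp (continuous_const.mul continuous_id)
    exact this.congr fun ω => (hFT ω).symm
  -- Step A: dominated convergence
  have hA : Tendsto (fun j => ∫ t, ζ (t + s j) * myFT φ t) atTop
      (𝓝 (∫ t, η t * myFT φ t)) := by
    apply tendsto_integral_of_dominated_convergence (fun t => M * ‖myFT φ t‖)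
    · intro j
      exact ((hζc.comp (continuous_id.add continuous_const)).mul hFTc).aestronglyMeasurable
    · exact hFTi.norm.const_mul M
    · intro j
      filter_upwards with t
      rw [norm_mul]
      exact mul_le_mul_of_nonneg_right (hM _) (norm_nonneg _)
    · filter_upwards with t
      have ht : t ∈ Set.Icc (-(|t| + 1)) (|t| + 1) :=
        ⟨by linarith [neg_abs_le t], by linarith [le_abs_self t]⟩
      have hT := (hconv (|t| + 1) (by positivity)).tendsto_at ht
      exact hT.mul tendsto_const_nhds
  -- Step B
  set g0 : ℝ → ℂ := K.indicator (fun ω => h ω * φ ω) with hg0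
  have hBj : ∀ j, (∫ t, ζ (t + s j) * myFT φ t)
      = ∫ ω, g0 ω * Complex.exp (Complex.I * ((-(s j) : ℝ) : ℂ) * ω) := by
    intro j
    set ψ : SchwartzMap ℝ ℂ := SchwartzMap.bilinLeftCLM (ContinuousLinearMap.mul ℝ ℂ)
      (hasTemperateGrowth_cexp (-(s j))) φ with hψdef
    have hψx : ∀ x : ℝ, ψ x = φ x * Complex.exp (Complex.I * ((-(s j) : ℝ) : ℂ) * x) :=
      fun x => rfl
    have hψsupp : tsupport (fun x => ψ x) ⊆ K := by
      refine (closure_mono ?_).trans hφK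
      intro x hx
      simp only [Function.mem_support, hψx] at hx ⊢
      intro h0
      exact hx (by rw [h0, zero_mul])
    have step1 : (∫ t, ζ (t + s j) * myFT φ t) = ∫ t, ζ t * myFT ψ t := by
      rw [← integral_add_right_eq_self (fun t => ζ t * myFT ψ t) (s j)]
      congr 1
      funext t
      congr 1
      rw [myFT, myFT]
      congr 1
      funext x
      rw [hψx, mul_comm (φ x) _, ← mul_assoc, ← Complex.exp_add]
      congr 2
      push_cast
      ring
    rw [step1, hrep ψ hψsupp, ← integral_indicator (measurableSet_closedBall)]
    congr 1
    funext ω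
    simp only [hg0]
    by_cases hω : ω ∈ K
    · rw [Set.indicator_of_mem hω, Set.indicator_of_mem hω, hψx]; ring
    · rw [Set.indicator_of_notMem hω, Set.indicator_of_notMem hω, zero_mul]
  -- Step C: Riemann-Lebesgue
  have hC : Tendsto (fun j => ∫ ω, g0 ω * Complex.exp (Complex.I * ((-(s j) : ℝ) : ℂ) * ω))
      atTop (𝓝 0) := by
    have hRL := Real.zero_at_infty_fourier g0
    have hw : Tendsto (fun j => s j / (2 * π)) atTop (cocompact ℝ) := by
      rw [cocompact_eq_atBot_atTop]
      exact (hs.atTop_div_const (by positivity)).mono_right le_sup_right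
    have hcomp := hRL.comp hw
    refine hcomp.congr fun j => ?_
    rw [Function.comp_apply, Real.fourier_real_eq_integral_exp_smul]
    congr 1
    funext v
    rw [smul_eq_mul, mul_comm]
    congr 1
    have hπ : (π : ℂ) ≠ 0 := Complex.ofReal_ne_zero.2 pi_ne_zero
    push_cast
    congr 1
    field_simp
  exact hφne (tendsto_nhds_unique hA (hC.congr fun j => (hBj j).symm))
end
end
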